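/- Let Γ_1,…,Γ_d be finite subsets of a finite set N, each with at least 3 elements. For a nonempty S ⊆ {1,…,d}, let e_S denote the number of equivalence classes of ⋃_{i∈S} Γ_i under the smallest equivalence relation in which all elements of each Γ_i with i ∈ S are mutually equivalent. Then the following are equivalent: (a) |⋃_{i∈S} Γ_i| − 2 ≥ Σ_{i∈S}(|Γ_i| − 2) for every nonempty S ⊆ {1,…,d}; (b) |⋃_{i∈S} Γ_i| − e_S − 1 ≥ Σ_{i∈S}(|Γ_i| − 2) for every nonempty S ⊆ {1,…,d}. -/

import Mathlib

open Finset

/-- `numComponents Γ S` is the number of connected components of the sub-hypergraph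
`{Γ_i}_{i∈S}`: the number of equivalence classes of `⋃_{i∈S} Γ_i` under the smallest
equivalence relation in which all elements of each `Γ_i` with `i ∈ S` are mutually
equivalent. -/
noncomputable def numComponents (Γ : ℕ → Finset ℕ) (S : Finset ℕ) : ℕ :=
  Nat.card (Quotient (Relation.EqvGen.setoid
    (fun a b : {x // x ∈ S.biUnion Γ} => ∃ i ∈ S, (a : ℕ) ∈ Γ i ∧ (b : ℕ) ∈ Γ i)))

/-- For a hypergraph `Γ_1,…,Γ_d` of subsets of a finite set `N`, each with at least 3
elements, the condition (‡): `|⋃_{i∈S} Γ_i| − 2 ≥ Σ_{i∈S}(|Γ_i| − 2)` for every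
nonempty `S ⊆ {1,…,d}` is equivalent to the condition
`|⋃_{i∈S} Γ_i| − e_S − 1 ≥ Σ_{i∈S}(|Γ_i| − 2)` for every nonempty `S ⊆ {1,…,d}`,
where `e_S` is the number of connected components of `{Γ_i}_{i∈S}`. -/
theorem ddagger_iff_components (d : ℕ) (N : Finset ℕ) (Γ : ℕ → Finset ℕ)
    (hsub : ∀ i ∈ Finset.Icc 1 d, Γ i ⊆ N)
    (hcard : ∀ i ∈ Finset.Icc 1 d, 3 ≤ (Γ i).card) :
    (∀ S ⊆ Finset.Icc 1 d, S.Nonempty →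
        (∑ i ∈ S, ((Γ i).card - 2)) + 2 ≤ (S.biUnion Γ).card) ↔
    (∀ S ⊆ Finset.Icc 1 d, S.Nonempty →
        (∑ i ∈ S, ((Γ i).card - 2)) + numComponents Γ S + 1 ≤ (S.biUnion Γ).card) := by
  classical
  have key : ∀ S ⊆ Finset.Icc 1 d, S.Nonempty →
      (∀ i ∈ S, (Γ i).Nonempty) →
      ∃ (e : ℕ), numComponents Γ S = e ∧ 1 ≤ e ∧
      (∃ (ι : Type) (_ : Fintype ι) (T : ι → Finset ℕ),
        (∀ q, T q ⊆ S) ∧ (∀ q, (T q).Nonempty) ∧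
        (∑ q : ι, ∑ i ∈ T q, ((Γ i).card - 2)) = ∑ i ∈ S, ((Γ i).card - 2) ∧
        (∑ q : ι, ((T q).biUnion Γ).card) = (S.biUnion Γ).card ∧
        Fintype.card ι = e) := by
    intro S hS hne hΓne
    set r := (fun a b : {x // x ∈ S.biUnion Γ} => ∃ i ∈ S, (a : ℕ) ∈ Γ i ∧ (b : ℕ) ∈ Γ i)
      with hrdef
    set st := Relation.EqvGen.setoid r with hst
    have hQfin : Finite (Quotient st) := Quotient.finite _
    have hQne : Nonempty (Quotient st) := by
      obtain ⟨i₀, hi₀⟩ := hne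
      obtain ⟨a, ha⟩ := hΓne i₀ hi₀
      exact ⟨Quotient.mk st ⟨a, Finset.mem_biUnion.mpr ⟨i₀, hi₀, ha⟩⟩⟩
    letI : Fintype (Quotient st) := Fintype.ofFinite _
    let g : ℕ → Quotient st := fun a =>
      if h : a ∈ S.biUnion Γ then Quotient.mk st ⟨a, h⟩ else Classical.arbitrary _
    let x : ℕ → ℕ := fun i => if h : (Γ i).Nonempty then h.choose else 0
    have hx : ∀ i ∈ S, x i ∈ Γ i := fun i hi => by
      simp only [x, dif_pos (hΓne i hi)]; exact (hΓne i hi).choose_spec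
    let fS : ℕ → Quotient st := fun i => g (x i)
    have hA : ∀ i ∈ S, ∀ a ∈ Γ i, g a = fS i := by
      intro i hi a ha
      have hab : a ∈ S.biUnion Γ := Finset.mem_biUnion.mpr ⟨i, hi, ha⟩
      have hxb : x i ∈ S.biUnion Γ := Finset.mem_biUnion.mpr ⟨i, hi, hx i hi⟩
      simp only [g, fS, dif_pos hab, dif_pos hxb]
      exact Quotient.sound (Relation.EqvGen.rel _ _ ⟨i, hi, ha, hx i hi⟩)
    have hB : ∀ q : Quotient st, ∃ i ∈ S, fS i = q := by
      intro q
      induction q using Quotient.inductionOn with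
      | h a =>
        obtain ⟨b, hb⟩ := a
        obtain ⟨i, hi, hbi⟩ := Finset.mem_biUnion.mp hb
        refine ⟨i, hi, ?_⟩
        rw [← hA i hi b hbi]
        simp only [g, dif_pos hb]
    let T : Quotient st → Finset ℕ := fun q => S.filter (fun i => fS i = q)
    refine ⟨Fintype.card (Quotient st), Nat.card_eq_fintype_card, Fintype.card_pos, Quotient st,
      inferInstance, T, fun q => Finset.filter_subset _ _, ?_, ?_, ?_, rfl⟩
    · intro q
      obtain ⟨i, hi, hfi⟩ := hB q
      exact ⟨i, Finset.mem_filter.mpr ⟨hi, hfi⟩⟩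
    · exact Finset.sum_fiberwise S fS (fun i => (Γ i).card - 2)
    · have hdisj : ((Finset.univ : Finset (Quotient st)) : Set (Quotient st)).PairwiseDisjoint
          (fun q => (T q).biUnion Γ) := by
        intro q _ q' _ hqq'
        simp only [Finset.disjoint_left]
        intro a ha ha'
        obtain ⟨i, hi, hai⟩ := Finset.mem_biUnion.mp ha
        obtain ⟨j, hj, haj⟩ := Finset.mem_biUnion.mp ha'
        obtain ⟨hiS, hfi⟩ := Finset.mem_filter.mp hi
        obtain ⟨hjS, hfj⟩ := Finset.mem_filter.mp hj
        exact hqq' (hfi ▸ hfj ▸ ((hA i hiS a hai).symm.trans (hA j hjS a haj)))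
      have hunion : Finset.univ.biUnion (fun q => (T q).biUnion Γ) = S.biUnion Γ := by
        ext a
        simp only [Finset.mem_biUnion, Finset.mem_univ, true_and, T, Finset.mem_filter]
        constructor
        · rintro ⟨q, i, ⟨hi, _⟩, ha⟩; exact ⟨i, hi, ha⟩
        · rintro ⟨i, hi, ha⟩; exact ⟨fS i, i, ⟨hi, rfl⟩, ha⟩
      rw [← Finset.card_biUnion (fun q _ q' _ h => hdisj (by simp) (by simp) h), hunion]
  have hΓne : ∀ S ⊆ Finset.Icc 1 d, ∀ i ∈ S, (Γ i).Nonempty := fun S hS i hi =>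
    Finset.card_pos.mp (by have := hcard i (hS hi); omega)
  constructor
  · intro h S hS hne
    obtain ⟨e, hnum, he1, ι, _, T, hTsub, hTne, hsum, hcardsum, hcι⟩ :=
      key S hS hne (hΓne S hS)
    have hbound : ∀ q : ι, (∑ i ∈ T q, ((Γ i).card - 2)) + 2 ≤ ((T q).biUnion Γ).card :=
      fun q => h (T q) (fun i hi => hS (hTsub q hi)) (hTne q)
    have := Finset.sum_le_sum (fun q (_ : q ∈ Finset.univ) => hbound q)
    rw [Finset.sum_add_distrib, hsum, hcardsum] at this
    simp only [Finset.sum_const, Finset.card_univ, hcι, smul_eq_mul] at this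
    rw [hnum]; omega
  · intro h S hS hne
    obtain ⟨e, hnum, he1, _⟩ := key S hS hne (hΓne S hS)
    have := h S hS hne
    rw [hnum] at this
    omega
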